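/- Let H be a Hilbert space, x a self-adjoint bounded operator with 0 ≤ x ≤ 1, and {p_λ : λ ∈ Λ} a family of orthogonal projections on H such that p_λ ≤ x for every λ. Then p ≤ x, where p is the supremum of the family {p_λ} in the lattice of projections (the projection onto the closed span of the ranges of the p_λ). -/

import Mathlib

open scoped InnerProductSpace


/-- If `0 ≤ x ≤ 1` is a self-adjoint operator on a Hilbert space dominating each member of a
family of orthogonal projections, then `x` dominates the supremum of the family, i.e. the
projection onto the closure of the span of the ranges. -/
theorem stmt7 {H : Type*} [NormedAddCommGroup H] [InnerProductSpace ℂ H] [CompleteSpace H]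
    {Λ : Type*} (x : H →L[ℂ] H) (hxsa : IsSelfAdjoint x) (hx0 : 0 ≤ x) (hx1 : x ≤ 1)
    (p : Λ → H →L[ℂ] H)
    (hproj : ∀ l, IsIdempotentElem (p l) ∧ IsSelfAdjoint (p l))
    (hle : ∀ l, p l ≤ x)
    (q : H →L[ℂ] H) (hqidem : IsIdempotentElem q) (hqsa : IsSelfAdjoint q)
    (hqrange : LinearMap.range (q : H →ₗ[ℂ] H) =
      (⨆ l, LinearMap.range ((p l : H →ₗ[ℂ] H))).topologicalClosure) :
    q ≤ x := by
  -- the norm of `x` is at most one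
  have hxnorm : ‖x‖ ≤ 1 := (CStarAlgebra.norm_le_one_iff_of_nonneg x hx0).mpr hx1
  -- `x` fixes every vector in the range of each `p l`
  have hfix : ∀ l, ∀ v : H, v ∈ LinearMap.range ((p l : H →ₗ[ℂ] H)) → x v = v := by
    rintro l v ⟨w, rfl⟩
    set v := p l w with hv
    have hpv : p l v = v := by
      simpa using DFunLike.congr_fun (congrArg ContinuousLinearMap.toLinearMap (hproj l).1) w
    have hpos : (x - p l).IsPositive := (ContinuousLinearMap.le_def (p l) x).mp (hle l)
    have h1 : (0 : ℝ) ≤ RCLike.re ⟪(x - p l) v, v⟫_ℂ := hpos.re_inner_nonneg_left v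
    have h2 : RCLike.re ⟪(x - p l) v, v⟫_ℂ
        = RCLike.re ⟪x v, v⟫_ℂ - ‖v‖ ^ 2 := by
      rw [ContinuousLinearMap.sub_apply, inner_sub_left, hpv, map_sub,
        @inner_self_eq_norm_sq ℂ]
    have h3 : ‖v‖ ^ 2 ≤ RCLike.re ⟪x v, v⟫_ℂ := by linarith [h1, h2]
    have h4 : ‖x v‖ ≤ ‖v‖ := by
      calc ‖x v‖ ≤ ‖x‖ * ‖v‖ := x.le_opNorm v
        _ ≤ 1 * ‖v‖ := by gcongr
        _ = ‖v‖ := one_mul _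
    have h5 : ‖x v - v‖ ^ 2 ≤ 0 := by
      rw [@norm_sub_sq ℂ]
      nlinarith [h3, h4, norm_nonneg (x v), norm_nonneg v]
    have h6 : x v - v = 0 := by
      have := sq_nonneg ‖x v - v‖
      have : ‖x v - v‖ = 0 := by nlinarith
      simpa using this
    exact sub_eq_zero.mp h6
  -- the fixed-point space of `x` is a closed submodule containing all the ranges
  set K : Submodule ℂ H := LinearMap.ker ((x - 1 : H →L[ℂ] H) : H →ₗ[ℂ] H) with hK
  have hKclosed : IsClosed (K : Set H) := ContinuousLinearMap.isClosed_ker (x - 1)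
  have hKmem : ∀ v : H, v ∈ K ↔ x v = v := by
    intro v
    simp [hK, LinearMap.mem_ker, sub_eq_zero]
  have hsup : (⨆ l, LinearMap.range ((p l : H →ₗ[ℂ] H))) ≤ K := by
    refine iSup_le fun l => fun v hv => (hKmem v).mpr (hfix l v hv)
  have hclos : (⨆ l, LinearMap.range ((p l : H →ₗ[ℂ] H))).topologicalClosure ≤ K :=
    Submodule.topologicalClosure_minimal _ hsup hKclosed
  -- hence `x * q = q` and `q * x = q`
  have hxq : x * q = q := by
    ext v
    have hqv : q v ∈ LinearMap.range (q : H →ₗ[ℂ] H) := ⟨v, rfl⟩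
    rw [hqrange] at hqv
    exact (hKmem (q v)).mp (hclos hqv)
  have hqx : q * x = q := by
    have := congrArg star hxq
    rwa [star_mul, hqsa.star_eq, hxsa.star_eq] at this
  -- conclude by positivity of the conjugated operator
  have hconj : (0 : H →L[ℂ] H) ≤ star (1 - q) * x * (1 - q) := star_left_conjugate_nonneg hx0 _
  have heq : star (1 - q) * x * (1 - q) = x - q := by
    have hstar : star (1 - q : H →L[ℂ] H) = 1 - q := by
      rw [star_sub, star_one, hqsa.star_eq]
    rw [hstar, sub_mul, one_mul, hqx, sub_mul, mul_sub, mul_sub, mul_one, mul_one,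
      hxq, hqidem]
    abel
  rw [heq] at hconj
  exact sub_nonneg.mp hconj
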